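/- Let u₂∞ > 0, C₀ > 0, M := 4·(u₂∞)² + 2·u₂∞ + √(u₂∞), and let u₁, u₂, u₃, a₁, a₂, a₃ ∈ [0, C₀] be reals with 4a₁ + 2a₂ + a₃ = M. Then there is a constant C depending only on C₀ such that |u₂ − u₂∞|² ≤ C·( Σⱼ |uⱼ − aⱼ|² + |u₂ − √u₁|² + |u₃ − √u₂|² ). -/
import Mathlib


lemma five_sq_aux (x₁ x₂ x₃ x₄ x₅ : ℝ) : (x₁ + x₂ + x₃ + x₄ + x₅) ^ 2 ≤
    5 * (x₁ ^ 2 + x₂ ^ 2 + x₃ ^ 2 + x₄ ^ 2 + x₅ ^ 2) := by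
  nlinarith [sq_nonneg (x₁ - x₂), sq_nonneg (x₁ - x₃), sq_nonneg (x₁ - x₄),
    sq_nonneg (x₁ - x₅), sq_nonneg (x₂ - x₃), sq_nonneg (x₂ - x₄), sq_nonneg (x₂ - x₅),
    sq_nonneg (x₃ - x₄), sq_nonneg (x₃ - x₅), sq_nonneg (x₄ - x₅)]

theorem pointwise_estimate_u2 (C₀ : ℝ) (hC₀ : 0 < C₀) :
    ∃ C : ℝ, 0 < C ∧ ∀ u₂eq u₁ u₂ u₃ a₁ a₂ a₃ : ℝ, 0 < u₂eq →
      u₁ ∈ Set.Icc 0 C₀ → u₂ ∈ Set.Icc 0 C₀ → u₃ ∈ Set.Icc 0 C₀ →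
      a₁ ∈ Set.Icc 0 C₀ → a₂ ∈ Set.Icc 0 C₀ → a₃ ∈ Set.Icc 0 C₀ →
      4 * a₁ + 2 * a₂ + a₃ = 4 * u₂eq ^ 2 + 2 * u₂eq + Real.sqrt u₂eq →
      |u₂ - u₂eq| ^ 2 ≤
        C * ((|u₁ - a₁| ^ 2 + |u₂ - a₂| ^ 2 + |u₃ - a₃| ^ 2) +
          |u₂ - Real.sqrt u₁| ^ 2 + |u₃ - Real.sqrt u₂| ^ 2) := by
  obtain ⟨K, hK⟩ : ∃ K, K = Real.sqrt C₀ := ⟨_, rfl⟩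
  have hKn : 0 ≤ K := hK ▸ Real.sqrt_nonneg _
  obtain ⟨B, hB⟩ : ∃ B : ℝ, B = 4 * (K + C₀ + 1) := ⟨_, rfl⟩
  have hBpos : 0 < B := by rw [hB]; linarith
  refine ⟨5 * B ^ 2, by positivity, ?_⟩
  intro u₂eq u₁ u₂ u₃ a₁ a₂ a₃ heq h1 h2 h3 ha1 ha2 ha3 hmass
  obtain ⟨h1l, h1r⟩ := h1
  obtain ⟨h2l, h2r⟩ := h2
  obtain ⟨h3l, h3r⟩ := h3
  obtain ⟨s₁, hs₁⟩ : ∃ s, s = Real.sqrt u₁ := ⟨_, rfl⟩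
  obtain ⟨s₂, hs₂⟩ : ∃ s, s = Real.sqrt u₂ := ⟨_, rfl⟩
  obtain ⟨se, hse⟩ : ∃ s, s = Real.sqrt u₂eq := ⟨_, rfl⟩
  rw [← hs₁, ← hs₂]
  rw [← hse] at hmass
  have hs₁sq : s₁ ^ 2 = u₁ := by rw [hs₁]; exact Real.sq_sqrt h1l
  have hs₂sq : s₂ ^ 2 = u₂ := by rw [hs₂]; exact Real.sq_sqrt h2l
  have hs₁n : 0 ≤ s₁ := hs₁ ▸ Real.sqrt_nonneg _
  have hs₂n : 0 ≤ s₂ := hs₂ ▸ Real.sqrt_nonneg _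
  have hsen : 0 ≤ se := hse ▸ Real.sqrt_nonneg _
  have hs₁le : s₁ ≤ K := by rw [hs₁, hK]; exact Real.sqrt_le_sqrt h1r
  -- step 1: 2|u₂ - u₂eq| ≤ |f(u₂) - f(u₂eq)|
  have key : 2 * |u₂ - u₂eq| ≤
      |4 * u₂ ^ 2 + 2 * u₂ + s₂ - (4 * u₂eq ^ 2 + 2 * u₂eq + se)| := by
    rcases le_total u₂ u₂eq with h | h
    · have hsq : u₂ ^ 2 ≤ u₂eq ^ 2 := by nlinarith
      have hs : s₂ ≤ se := by rw [hs₂, hse]; exact Real.sqrt_le_sqrt h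
      rw [abs_of_nonpos (by linarith), abs_of_nonpos (by linarith)]
      linarith
    · have hsq : u₂eq ^ 2 ≤ u₂ ^ 2 := by nlinarith [heq.le]
      have hs : se ≤ s₂ := by rw [hs₂, hse]; exact Real.sqrt_le_sqrt h
      rw [abs_of_nonneg (by linarith), abs_of_nonneg (by linarith)]
      linarith
  -- step 2: decomposition + triangle inequality
  have tri : |4 * u₂ ^ 2 + 2 * u₂ + s₂ - (4 * u₂eq ^ 2 + 2 * u₂eq + se)| ≤
      4 * |u₂ ^ 2 - u₁| + 4 * |u₁ - a₁| + 2 * |u₂ - a₂| + |u₃ - s₂| + |u₃ - a₃| := by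
    have hdec : 4 * u₂ ^ 2 + 2 * u₂ + s₂ - (4 * u₂eq ^ 2 + 2 * u₂eq + se) =
        4 * (u₂ ^ 2 - u₁) + 4 * (u₁ - a₁) + 2 * (u₂ - a₂) - (u₃ - s₂) + (u₃ - a₃) := by
      linarith
    rw [hdec]
    have t1 := abs_add_le (4 * (u₂ ^ 2 - u₁) + 4 * (u₁ - a₁) + 2 * (u₂ - a₂) - (u₃ - s₂)) (u₃ - a₃)
    have t2 := abs_sub (4 * (u₂ ^ 2 - u₁) + 4 * (u₁ - a₁) + 2 * (u₂ - a₂)) (u₃ - s₂)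
    have t3 := abs_add_le (4 * (u₂ ^ 2 - u₁) + 4 * (u₁ - a₁)) (2 * (u₂ - a₂))
    have t4 := abs_add_le (4 * (u₂ ^ 2 - u₁)) (4 * (u₁ - a₁))
    simp only [abs_mul, abs_of_nonneg (by norm_num : (0:ℝ) ≤ 4),
      abs_of_nonneg (by norm_num : (0:ℝ) ≤ 2)] at t1 t2 t3 t4
    linarith
  -- step 3: |u₂^2 - u₁| ≤ (K + C₀) * |u₂ - s₁|
  have hfact : |u₂ ^ 2 - u₁| ≤ (K + C₀) * |u₂ - s₁| := by
    have hf : u₂ ^ 2 - u₁ = (u₂ - s₁) * (u₂ + s₁) := by nlinarith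
    rw [hf, abs_mul]
    have habs : |u₂ + s₁| = u₂ + s₁ := abs_of_nonneg (by linarith)
    rw [habs, mul_comm]
    exact mul_le_mul_of_nonneg_right (by linarith) (abs_nonneg _)
  obtain ⟨d, hdd⟩ : ∃ x, x = |u₂ - u₂eq| := ⟨_, rfl⟩
  obtain ⟨y, hyd⟩ : ∃ x, x = |u₂ ^ 2 - u₁| := ⟨_, rfl⟩
  obtain ⟨F, hFd⟩ : ∃ x, x = |4 * u₂ ^ 2 + 2 * u₂ + s₂ - (4 * u₂eq ^ 2 + 2 * u₂eq + se)| := ⟨_, rfl⟩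
  rw [← hdd, ← hFd] at key
  rw [← hFd, ← hyd] at tri
  rw [← hyd] at hfact
  rw [← hdd]
  obtain ⟨x₁, hx1d⟩ : ∃ x, x = |u₂ - s₁| := ⟨_, rfl⟩
  obtain ⟨x₂, hx2d⟩ : ∃ x, x = |u₁ - a₁| := ⟨_, rfl⟩
  obtain ⟨x₃, hx3d⟩ : ∃ x, x = |u₂ - a₂| := ⟨_, rfl⟩
  obtain ⟨x₄, hx4d⟩ : ∃ x, x = |u₃ - s₂| := ⟨_, rfl⟩
  obtain ⟨x₅, hx5d⟩ : ∃ x, x = |u₃ - a₃| := ⟨_, rfl⟩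
  rw [← hx2d, ← hx3d, ← hx4d, ← hx5d] at tri
  rw [← hx1d] at hfact
  rw [← hx1d, ← hx2d, ← hx3d, ← hx4d, ← hx5d]
  have hx₁ : 0 ≤ x₁ := hx1d ▸ abs_nonneg _
  have hx₂ : 0 ≤ x₂ := hx2d ▸ abs_nonneg _
  have hx₃ : 0 ≤ x₃ := hx3d ▸ abs_nonneg _
  have hx₄ : 0 ≤ x₄ := hx4d ▸ abs_nonneg _
  have hx₅ : 0 ≤ x₅ := hx5d ▸ abs_nonneg _
  have h4 : (4:ℝ) ≤ B := by rw [hB]; linarith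
  have h4K : 4 * (K + C₀) ≤ B := by rw [hB]; linarith
  have hlin : 2 * d ≤ B * (x₁ + x₂ + x₃ + x₄ + x₅) := by
    have m₁ := mul_le_mul_of_nonneg_right h4K hx₁
    have m₂ := mul_le_mul_of_nonneg_right h4 hx₂
    have m₃ := mul_le_mul_of_nonneg_right h4 hx₃
    have m₄ := mul_le_mul_of_nonneg_right h4 hx₄
    have m₅ := mul_le_mul_of_nonneg_right h4 hx₅
    linarith [le_trans key tri]
  have hd : 0 ≤ d := hdd ▸ abs_nonneg _
  have hsq : (2 * d) ^ 2 ≤ (B * (x₁ + x₂ + x₃ + x₄ + x₅)) ^ 2 :=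
    pow_le_pow_left₀ (by linarith) hlin 2
  have hcs := five_sq_aux x₁ x₂ x₃ x₄ x₅
  have hfin := mul_le_mul_of_nonneg_left hcs (sq_nonneg B)
  have hnn : 0 ≤ B ^ 2 * (x₁ ^ 2 + x₂ ^ 2 + x₃ ^ 2 + x₄ ^ 2 + x₅ ^ 2) := by positivity
  linarith [hsq, hfin, hnn]
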